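/- Let G be a finite group with a normal subgroup N of odd order such that G/N is a 2-group (G is 2-nilpotent with normal Hall 2'-subgroup N). If g ∈ N is inverted by some element x ∈ G (x * g * x⁻¹ = g⁻¹) and g has odd order, then g is inverted by some element whose order is a power of 2. -/

import Mathlib

/-- In a 2-nilpotent group (normal odd-order `N` with `G/N` a 2-group), a real
element `g ∈ N` of odd order is inverted by some element of 2-power order. -/
theorem stmt5 {G : Type*} [Group G] [Fintype G] (N : Subgroup G) [N.Normal]
    (hN : Odd (Nat.card N)) (hquot : IsPGroup 2 (G ⧸ N))
    (g : G) (hg : g ∈ N) (hgodd : Odd (orderOf g))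
    (hreal : ∃ x : G, x * g * x⁻¹ = g⁻¹) :
    ∃ y : G, (∃ k : ℕ, orderOf y = 2 ^ k) ∧ y * g * y⁻¹ = g⁻¹ := by
  obtain ⟨x, hx⟩ := hreal
  set n := orderOf x with hn
  have hnpos : 0 < n := orderOf_pos x
  set m := (n / 2 ^ n.factorization 2) with hm
  have hmdvd : m ∣ n := Nat.ordCompl_dvd n 2
  have hmodd : Odd m := by
    rcases Nat.even_or_odd m with h | h
    · exact absurd h.two_dvd (Nat.not_dvd_ordCompl (by norm_num) hnpos.ne')
    · exact h
  refine ⟨x ^ m, ⟨n.factorization 2, ?_⟩, ?_⟩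
  · rw [orderOf_pow, ← hn, Nat.gcd_eq_right hmdvd, hm]
    have := (Nat.ordProj_mul_ordCompl_eq_self n 2)
    have hmpos : 0 < (n / 2 ^ n.factorization 2) := Nat.ordCompl_pos 2 hnpos.ne'
    calc n / (n / 2 ^ n.factorization 2) = (2 ^ n.factorization 2 * (n / 2 ^ n.factorization 2)) / (n / 2 ^ n.factorization 2) := by
          rw [this]
      _ = 2 ^ n.factorization 2 := Nat.mul_div_cancel _ hmpos
  · have h2 : x ^ 2 * g = g * x ^ 2 := by
      have : x ^ 2 * g * (x ^ 2)⁻¹ = g := by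
        calc x ^ 2 * g * (x ^ 2)⁻¹ = x * (x * g * x⁻¹) * x⁻¹ := by simp [pow_two, mul_inv_rev, mul_assoc]
          _ = x * g⁻¹ * x⁻¹ := by rw [hx]
          _ = (x * g * x⁻¹)⁻¹ := by group
          _ = g := by rw [hx, inv_inv]
      rw [mul_inv_eq_iff_eq_mul] at this
      exact this
    have hc : Commute ((x ^ 2) ^ ((m - 1) / 2)) g := (Commute.pow_left h2 _)
    obtain ⟨j, hj⟩ := hmodd
    have hj' : (m - 1) / 2 = j := by omega
    have hxm : x ^ m = (x ^ 2) ^ j * x := by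
      rw [hj, pow_succ, pow_mul]
    rw [hj'] at hc
    calc x ^ m * g * (x ^ m)⁻¹ = (x ^ 2) ^ j * (x * g * x⁻¹) * ((x ^ 2) ^ j)⁻¹ := by
          rw [hxm]; simp [mul_inv_rev, mul_assoc]
      _ = (x ^ 2) ^ j * g⁻¹ * ((x ^ 2) ^ j)⁻¹ := by rw [hx]
      _ = g⁻¹ := by rw [hc.inv_right.eq, mul_assoc, mul_inv_cancel, mul_one]
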